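/- For every λ > 0, the denominator D(λ) = 1 − 2λe^{−λ} − e^{−2λ} is strictly positive, and the quantity r(λ) = (1 − λ − e^{−2λ}(1 + λ)) / (1 − 2λe^{−λ} − e^{−2λ}) satisfies r(λ) < −1. Consequently r(λ)² − 1 > 0, so θ(λ) = −r(λ) − √(r(λ)² − 1) is a well-defined real number, and θ(λ) ∈ (0, 1). -/

import Mathlib

/-- The denominator appearing in the implied ARMA(1,1) map of the integrated
OU model. -/
noncomputable def armaDenom (lam : ℝ) : ℝ :=
  1 - 2 * lam * Real.exp (-lam) - Real.exp (-2 * lam)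

/-- The ratio `r(λ)` of the implied ARMA(1,1) map. -/
noncomputable def armaR (lam : ℝ) : ℝ :=
  (1 - lam - Real.exp (-2 * lam) * (1 + lam)) / armaDenom lam

/-- The moving-average parameter `θ(λ) = −r(λ) − √(r(λ)² − 1)`. -/
noncomputable def armaTheta (lam : ℝ) : ℝ :=
  -armaR lam - Real.sqrt (armaR lam ^ 2 - 1)

lemma exp_neg_hasDerivAt (t : ℝ) :
    HasDerivAt (fun s : ℝ => Real.exp (-s)) (-Real.exp (-t)) t := by
  simpa [Function.comp_def] using (Real.hasDerivAt_exp (-t)).comp t ((hasDerivAt_id t).neg)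

/-- `2(1 - e^{-λ}) < λ(1 + e^{-λ})` for `λ > 0` (i.e. `tanh(λ/2) < λ/2`). -/
lemma key_tanh (lam : ℝ) (hlam : 0 < lam) :
    2 * (1 - Real.exp (-lam)) < lam * (1 + Real.exp (-lam)) := by
  set u : ℝ → ℝ := fun t => t * (1 + Real.exp (-t)) - 2 + 2 * Real.exp (-t) with hu
  have hderiv : ∀ t : ℝ, HasDerivAt u (1 - (1 + t) * Real.exp (-t)) t := by
    intro t
    have h1 := exp_neg_hasDerivAt t
    have hA := (hasDerivAt_id t).mul (h1.const_add 1)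
    have hB := (hA.sub_const 2).add (h1.const_mul 2)
    refine hB.congr_deriv ?_
    simp only [id]
    ring
  have hmono : StrictMonoOn u (Set.Ici (0 : ℝ)) := by
    apply strictMonoOn_of_deriv_pos (convex_Ici 0)
    · exact Continuous.continuousOn (by fun_prop)
    · intro t ht
      rw [interior_Ici] at ht
      have ht0 : (0 : ℝ) < t := ht
      rw [(hderiv t).deriv]
      have hexp : 1 + t < Real.exp t := by
        have := Real.add_one_lt_exp (ne_of_gt ht0)
        linarith
      have hpos : (1 + t) * Real.exp (-t) < 1 := by
        rw [Real.exp_neg]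
        rw [mul_inv_lt_iff₀ (Real.exp_pos t)]
        linarith
      linarith
  have h0 : u 0 = 0 := by simp [hu]
  have := hmono (Set.mem_Ici.mpr le_rfl) (Set.mem_Ici.mpr (le_of_lt hlam)) hlam
  rw [h0] at this
  simp only [hu] at this
  linarith

theorem arma_theta_wellDefined (lam : ℝ) (hlam : 0 < lam) :
    0 < armaDenom lam ∧ armaR lam < -1 ∧ 0 < armaR lam ^ 2 - 1 ∧
      armaTheta lam ∈ Set.Ioo (0 : ℝ) 1 := by
  have hx : 0 < Real.exp (-lam) := Real.exp_pos _
  have hx2 : Real.exp (-2 * lam) = Real.exp (-lam) ^ 2 := by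
    rw [sq, ← Real.exp_add]; ring_nf
  have hprod : Real.exp lam * Real.exp (-lam) = 1 := by
    rw [← Real.exp_add]; simp
  have hsinh : 2 * lam < Real.exp lam - Real.exp (-lam) := by
    have := Real.self_lt_sinh_iff.mpr hlam
    rw [Real.sinh_eq] at this
    linarith
  -- denominator positive
  have hD : 0 < armaDenom lam := by
    have h := mul_pos hx (by linarith : (0:ℝ) < Real.exp lam - Real.exp (-lam) - 2 * lam)
    unfold armaDenom
    rw [hx2]
    nlinarith [h, hprod]
  -- r < -1
  have hkey := key_tanh lam hlam
  have hr : armaR lam < -1 := by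
    unfold armaR
    rw [div_lt_iff₀ hD]
    unfold armaDenom
    rw [hx2]
    have hfac : 0 < (1 + Real.exp (-lam)) *
        (lam * (1 + Real.exp (-lam)) - 2 * (1 - Real.exp (-lam))) :=
      mul_pos (by linarith) (by linarith)
    nlinarith [hfac]
  have hsq : 0 < armaR lam ^ 2 - 1 := by nlinarith [hr]
  refine ⟨hD, hr, hsq, ?_, ?_⟩
  · -- 0 < θ
    have hs : Real.sqrt (armaR lam ^ 2 - 1) < -armaR lam :=
      (Real.sqrt_lt' (by linarith)).mpr (by nlinarith)
    unfold armaTheta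
    linarith
  · -- θ < 1
    have hs : -armaR lam - 1 < Real.sqrt (armaR lam ^ 2 - 1) := by
      rw [show -armaR lam - 1 = -(armaR lam + 1) by ring]
      have h1 : 0 < -(armaR lam + 1) := by linarith
      exact (Real.lt_sqrt (le_of_lt h1)).mpr (by nlinarith)
    unfold armaTheta
    linarith
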